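/- arXiv:0910.3715 — 2 statements merged into one kernel-verified Lean document; each statement's English description precedes it below -/
import Mathlib

section
/- Let α be a nonzero algebraic real number of degree m over ℚ, let L be the Liouville constant, and let α_k = p_k/q_k with p_k = 10^{k!} Σ_{j=1}^k 10^{-j!}, q_k = 10^{k!}. Then γ_k := α·α_k is algebraic of degree m, and |αL - γ_k| ≤ c · H(α_k)^{-(k+1)} for all k ≥ 1, where c = 10|α|/9. -/
open Polynomial Filter

/-- Primitive integer minimal polynomial of a real number. -/
noncomputable def intMin (x : ℝ) : Polynomial ℤ :=
  (IsLocalization.integerNormalization (nonZeroDivisors ℤ) (minpoly ℚ x)).primPart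

/-- Height of an integer polynomial: max absolute value of its coefficients. -/
def polyHeight (P : Polynomial ℤ) : ℕ :=
  (Finset.range (P.natDegree + 1)).sup fun i => (P.coeff i).natAbs

/-- Height of an algebraic real number. -/
noncomputable def aheight (x : ℝ) : ℕ := polyHeight (intMin x)

/-- Degree of a real number over ℚ. -/
noncomputable def adeg (x : ℝ) : ℕ := (minpoly ℚ x).natDegree

/-- Liouville constant L = ∑ 10^{-j!}, j ≥ 1. -/
noncomputable def Lconst : ℝ := ∑' j : ℕ, 1 / (10 : ℝ) ^ (Nat.factorial (j + 1))

/-- Numerator of k-th truncation of L. -/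
def pk (k : ℕ) : ℤ := ∑ j ∈ Finset.range k, 10 ^ ((Nat.factorial k) - (Nat.factorial (j + 1)))

/-- Denominator of k-th truncation of L. -/
def qk (k : ℕ) : ℤ := 10 ^ (Nat.factorial k)

/-- Set of degree-n algebraic approximants witnessing exponent w. -/
noncomputable def wSet (ξ : ℝ) (n : ℕ) (w : ℝ) : Set ℝ :=
  {γ : ℝ | IsAlgebraic ℚ γ ∧ adeg γ = n ∧ 0 < |ξ - γ| ∧
    |ξ - γ| < (aheight γ : ℝ) ^ (-w - 1)}

/-- ξ is a U_m-number: w*_m(ξ) = ∞ and w*_n(ξ) < ∞ for 1 ≤ n < m. -/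
noncomputable def IsUm (ξ : ℝ) (m : ℕ) : Prop :=
  (∀ w : ℝ, (wSet ξ m w).Infinite) ∧
    ∀ n : ℕ, 1 ≤ n → n < m → ∃ w : ℝ, (wSet ξ n w).Finite

/-- ξ is a Liouville number. -/
def IsLiouvilleNum (x : ℝ) : Prop :=
  ∀ w : ℝ, 0 < w →
    {r : ℚ | 0 < |x - (r : ℝ)| ∧ |x - (r : ℝ)| < (r.den : ℝ) ^ (-w)}.Infinite

/-- Height of a rational number: max of |numerator| and denominator. -/
def qheight (r : ℚ) : ℕ := max r.num.natAbs r.den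

/- auxiliary lemmas -/

lemma my_summable : Summable (fun j : ℕ => (1:ℝ)/10^(Nat.factorial (j+1))) := by
  apply Summable.of_nonneg_of_le (fun j => by positivity) (fun j => ?_)
    (summable_geometric_of_lt_one (by norm_num : (0:ℝ) ≤ 1/10) (by norm_num))
  rw [div_pow, one_pow]
  apply one_div_le_one_div_of_le (by positivity)
  exact pow_le_pow_right₀ (by norm_num) (le_trans (Nat.le_succ j) (Nat.self_le_factorial _))

lemma ratio_eq (k : ℕ) :
    (pk k : ℝ)/(qk k : ℝ) = ∑ j ∈ Finset.range k, (1:ℝ)/10^(Nat.factorial (j+1)) := by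
  rw [pk, qk]
  push_cast
  rw [Finset.sum_div]
  refine Finset.sum_congr rfl fun j hj => ?_
  have h : Nat.factorial (j+1) ≤ Nat.factorial k :=
    Nat.factorial_le (Finset.mem_range.1 hj)
  rw [div_eq_div_iff (by positivity) (by positivity), one_mul, ← pow_add,
    Nat.sub_add_cancel h]

lemma fact_add_le (a i : ℕ) (ha : 1 ≤ a) : Nat.factorial a + i ≤ Nat.factorial (i + a) := by
  induction i with
  | zero => simp
  | succ i ih =>
    have h1 : 1 ≤ Nat.factorial (i + a) := Nat.one_le_iff_ne_zero.2 (Nat.factorial_ne_zero _)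
    have h2 : 1 ≤ i + a := le_trans ha (Nat.le_add_left a i)
    calc Nat.factorial a + (i + 1) ≤ Nat.factorial (i + a) + 1 := by omega
    _ ≤ Nat.factorial (i + a) + (i + a) * Nat.factorial (i + a) := by nlinarith
    _ = Nat.factorial (i + a + 1) := by rw [Nat.factorial_succ]; ring
    _ = Nat.factorial (i + 1 + a) := by ring_nf

lemma tail_bounds (k : ℕ) (hk : 1 ≤ k) :
    0 ≤ Lconst - (pk k : ℝ)/(qk k : ℝ) ∧
    Lconst - (pk k : ℝ)/(qk k : ℝ) ≤ (10/9) * (1/10^(Nat.factorial (k+1))) := by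
  have hsum := my_summable
  have htail : Summable (fun i : ℕ => (1:ℝ)/10^(Nat.factorial (i + k + 1))) := by
    have := (summable_nat_add_iff (f := fun j : ℕ => (1:ℝ)/10^(Nat.factorial (j+1))) k).2 hsum
    simpa using this
  have key : Lconst - (pk k : ℝ)/(qk k : ℝ) = ∑' i : ℕ, (1:ℝ)/10^(Nat.factorial (i + k + 1)) := by
    rw [Lconst, ratio_eq, sub_eq_iff_eq_add']
    exact (Summable.sum_add_tsum_nat_add k hsum).symm
  have hfe : (fun i : ℕ => (1:ℝ)/10^(Nat.factorial (k+1) + i))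
      = fun i : ℕ => (1/10^(Nat.factorial (k+1))) * (1/10:ℝ)^i := by
    funext i
    rw [pow_add, div_pow, one_pow, div_mul_div_comm, one_mul]
  have hg : Summable (fun i : ℕ => (1:ℝ)/10^(Nat.factorial (k+1) + i)) := by
    rw [hfe]
    exact (summable_geometric_of_lt_one (by norm_num) (by norm_num)).mul_left _
  refine ⟨by rw [key]; exact tsum_nonneg (fun i => by positivity), ?_⟩
  rw [key]
  calc ∑' i : ℕ, (1:ℝ)/10^(Nat.factorial (i + k + 1))
      ≤ ∑' i : ℕ, (1:ℝ)/10^(Nat.factorial (k+1) + i) := by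
        refine Summable.tsum_le_tsum (fun i => ?_) htail hg
        apply one_div_le_one_div_of_le (by positivity)
        apply pow_le_pow_right₀ (by norm_num)
        have := fact_add_le (k+1) i (by omega)
        have h2 : i + (k+1) = i + k + 1 := by omega
        rwa [h2] at this
    _ = (1/10^(Nat.factorial (k+1))) * (1 - 1/10)⁻¹ := by
        rw [hfe, tsum_mul_left, tsum_geometric_of_lt_one (by norm_num) (by norm_num)]
    _ = (10/9) * (1/10^(Nat.factorial (k+1))) := by ring_nf

lemma pk_pos (k : ℕ) (hk : 1 ≤ k) : 0 < pk k := by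
  rw [pk]
  apply Finset.sum_pos (fun j _ => by positivity)
  exact ⟨0, Finset.mem_range.2 hk⟩

lemma qk_pos (k : ℕ) : 0 < qk k := by rw [qk]; positivity

lemma pk_lt_qk (k : ℕ) (hk : 1 ≤ k) : pk k < qk k := by
  have hq : (0:ℝ) < (qk k : ℝ) := by exact_mod_cast qk_pos k
  have h1 : (pk k : ℝ)/(qk k : ℝ) < 1 := by
    rw [ratio_eq]
    calc ∑ j ∈ Finset.range k, (1:ℝ)/10^(Nat.factorial (j+1))
        ≤ ∑' j : ℕ, (1:ℝ)/10^(Nat.factorial (j+1)) :=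
          Summable.sum_le_tsum _ (fun i _ => by positivity) my_summable
      _ ≤ ∑' j : ℕ, (1/10:ℝ)^(j+1) := by
          refine Summable.tsum_le_tsum (fun j => ?_) my_summable ?_
          · rw [div_pow, one_pow]
            apply one_div_le_one_div_of_le (by positivity)
            exact pow_le_pow_right₀ (by norm_num) (Nat.self_le_factorial _)
          · exact (summable_nat_add_iff 1).2
              (summable_geometric_of_lt_one (by norm_num) (by norm_num))
      _ < 1 := by
          have : (fun j : ℕ => (1/10:ℝ)^(j+1)) = fun j : ℕ => (1/10:ℝ) * (1/10)^j := by
            funext j; rw [pow_succ]; ring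
          rw [this, tsum_mul_left, tsum_geometric_of_lt_one (by norm_num) (by norm_num)]
          norm_num
  have := (div_lt_one hq).1 h1
  exact_mod_cast this

lemma qheight_le (k : ℕ) (hk : 1 ≤ k) :
    (qheight ((pk k : ℚ) / (qk k : ℚ)) : ℤ) ≤ qk k := by
  set r : ℚ := (pk k : ℚ) / (qk k : ℚ) with hr
  have hqpos := qk_pos k
  have hppos := pk_pos k hk
  have hden : (r.den : ℤ) ∣ qk k := by
    rw [hr, ← Rat.divInt_eq_div]
    exact Rat.den_dvd _ _
  have hdenle : (r.den : ℤ) ≤ qk k := Int.le_of_dvd hqpos hden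
  have hcross : r.num * qk k = pk k * (r.den : ℤ) := by
    have h1 : (r.num : ℚ) / (r.den : ℚ) = (pk k : ℚ) / (qk k : ℚ) := by
      rw [Rat.num_div_den]
    have h2 : (r.num : ℚ) * (qk k : ℚ) = (pk k : ℚ) * (r.den : ℚ) := by
      rw [div_eq_div_iff (by exact_mod_cast r.den_pos.ne') (by exact_mod_cast hqpos.ne')] at h1
      exact h1
    exact_mod_cast h2
  have hnum_nonneg : 0 ≤ r.num := by
    rw [Rat.num_nonneg, hr]
    positivity
  have hnumle : r.num ≤ pk k := by
    have h3 : r.num * qk k ≤ pk k * qk k := by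
      rw [hcross]
      exact mul_le_mul_of_nonneg_left hdenle hppos.le
    exact le_of_mul_le_mul_right h3 hqpos
  rw [qheight, Nat.cast_max]
  apply max_le
  · rw [Int.natAbs_of_nonneg hnum_nonneg]
    exact le_trans hnumle (pk_lt_qk k hk).le
  · exact hdenle

lemma adeg_mul_rat (α : ℝ) (hα : IsAlgebraic ℚ α) (c : ℚ) (hc : c ≠ 0) :
    adeg (α * (c : ℝ)) = adeg α := by
  have hint : IsIntegral ℚ α := hα.isIntegral
  have hint2 : IsIntegral ℚ (α * (c:ℝ)) := hint.mul isIntegral_algebraMap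
  have hadj : IntermediateField.adjoin ℚ {α * (c:ℝ)} = IntermediateField.adjoin ℚ {α} := by
    apply le_antisymm
    · rw [IntermediateField.adjoin_simple_le_iff]
      exact mul_mem (IntermediateField.mem_adjoin_simple_self ℚ α)
        (IntermediateField.algebraMap_mem _ c)
    · rw [IntermediateField.adjoin_simple_le_iff]
      have hc' : ((c:ℝ)) ≠ 0 := by exact_mod_cast hc
      have hmem : (α * (c:ℝ)) * ((c⁻¹ : ℚ) : ℝ) ∈ IntermediateField.adjoin ℚ {α * (c:ℝ)} :=
        mul_mem (IntermediateField.mem_adjoin_simple_self ℚ _)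
          (IntermediateField.algebraMap_mem _ _)
      have heq : (α * (c:ℝ)) * ((c⁻¹ : ℚ) : ℝ) = α := by
        push_cast
        rw [mul_assoc, mul_inv_cancel₀ hc', mul_one]
      rwa [heq] at hmem
  rw [adeg, adeg, ← IntermediateField.adjoin.finrank hint, ← IntermediateField.adjoin.finrank hint2,
    hadj]

theorem stmt7 (α : ℝ) (hα0 : α ≠ 0) (hα : IsAlgebraic ℚ α) (m : ℕ)
    (hm : adeg α = m) (k : ℕ) (hk : 1 ≤ k) :
    adeg (α * ((pk k : ℝ) / (qk k : ℝ))) = m ∧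
      |α * Lconst - α * ((pk k : ℝ) / (qk k : ℝ))| ≤
        (10 * |α| / 9) / (qheight ((pk k : ℚ) / (qk k : ℚ)) : ℝ) ^ (k + 1) := by
  have hppos := pk_pos k hk
  have hqpos := qk_pos k
  constructor
  · have hc : ((pk k : ℚ) / (qk k : ℚ)) ≠ 0 := by
      apply div_ne_zero <;> exact_mod_cast (by positivity : (0:ℤ) < _).ne' -- fix
    have hcast : (pk k : ℝ) / (qk k : ℝ) = (((pk k : ℚ) / (qk k : ℚ) : ℚ) : ℝ) := by push_cast; ring
    rw [hcast, adeg_mul_rat α hα _ hc, hm]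
  · obtain ⟨h0, h1⟩ := tail_bounds k hk
    have heq : |α * Lconst - α * ((pk k : ℝ) / (qk k : ℝ))|
        = |α| * (Lconst - (pk k : ℝ)/(qk k : ℝ)) := by
      rw [← mul_sub, abs_mul, abs_of_nonneg h0]
    rw [heq]
    have hH1 : 1 ≤ qheight ((pk k : ℚ) / (qk k : ℚ)) :=
      le_trans (Rat.den_pos _) (le_max_right _ _)
    have hHle : (qheight ((pk k : ℚ) / (qk k : ℚ)) : ℝ) ≤ (10:ℝ)^(Nat.factorial k) := by
      have h := qheight_le k hk
      have h2 : ((qk k : ℤ) : ℝ) = (10:ℝ)^(Nat.factorial k) := by rw [qk]; push_cast; ring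
      calc (qheight ((pk k : ℚ) / (qk k : ℚ)) : ℝ) ≤ ((qk k : ℤ) : ℝ) := by exact_mod_cast h
        _ = _ := h2
    have hHpos : (0:ℝ) < (qheight ((pk k : ℚ) / (qk k : ℚ)) : ℝ) := by
      exact_mod_cast lt_of_lt_of_le one_pos (by exact_mod_cast hH1)
    calc |α| * (Lconst - (pk k : ℝ)/(qk k : ℝ))
        ≤ |α| * ((10/9) * (1/10^(Nat.factorial (k+1)))) :=
          mul_le_mul_of_nonneg_left h1 (abs_nonneg α)
      _ = (10 * |α| / 9) / ((10:ℝ)^(Nat.factorial k)) ^ (k + 1) := by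
          rw [← pow_mul]
          have : Nat.factorial k * (k+1) = Nat.factorial (k+1) := by
            rw [Nat.factorial_succ]; ring
          rw [this]; ring
      _ ≤ (10 * |α| / 9) / (qheight ((pk k : ℚ) / (qk k : ℚ)) : ℝ) ^ (k + 1) := by
          gcongr (10 * |α| / 9) / ?_ ^ (k+1) <;>
            first | exact hHpos | exact hHle | positivity
end

section
/- Let α be a nonzero real algebraic number of degree m and L the Liouville constant. Then α·L is a Liouville-type approximable number of degree m: there exist infinitely many algebraic numbers γ of degree m such that for every w > 0, all but finitely many of these γ satisfy 0 < |αL - γ| < H(γ)^{-w}. Equivalently, w*_m(αL) = ∞. -/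
open Polynomial Filter

/-! ### Auxiliary lemmas -/

section IntMin

variable {x : ℝ}

lemma intNorm_ne_zero (hx : IsAlgebraic ℚ x) :
    IsLocalization.integerNormalization (nonZeroDivisors ℤ) (minpoly ℚ x) ≠ 0 := by
  rw [Ne, IsFractionRing.integerNormalization_eq_zero_iff]
  exact minpoly.ne_zero hx.isIntegral

lemma intMin_ne_zero : intMin x ≠ 0 := Polynomial.primPart_ne_zero _

lemma intMin_isPrimitive : (intMin x).IsPrimitive := Polynomial.isPrimitive_primPart _

lemma aeval_intMin (hx : IsAlgebraic ℚ x) : Polynomial.aeval x (intMin x) = 0 := by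
  apply Polynomial.aeval_primPart_eq_zero (intNorm_ne_zero hx)
  exact IsLocalization.integerNormalization_aeval_eq_zero _ _ (minpoly.aeval ℚ x)

lemma intMin_map_eq (hx : IsAlgebraic ℚ x) : ∃ c : ℚ, c ≠ 0 ∧
    (intMin x).map (Int.castRingHom ℚ) = C c * minpoly ℚ x := by
  obtain ⟨b, hb⟩ := IsLocalization.integerNormalization_map_to_map (nonZeroDivisors ℤ)
    (minpoly ℚ x)
  set N := IsLocalization.integerNormalization (nonZeroDivisors ℤ) (minpoly ℚ x) with hN
  have hcont : N = C N.content * intMin x := N.eq_C_content_mul_primPart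
  have hc0 : N.content ≠ 0 := by
    simpa [Ne, Polynomial.content_eq_zero_iff] using intNorm_ne_zero hx
  have hb0 : (b : ℤ) ≠ 0 := nonZeroDivisors.coe_ne_zero b
  have hcQ : (N.content : ℚ) ≠ 0 := Int.cast_ne_zero.mpr hc0
  refine ⟨((b : ℤ) : ℚ) / (N.content : ℚ), by
    rw [div_ne_zero_iff]; exact ⟨Int.cast_ne_zero.mpr hb0, hcQ⟩, ?_⟩
  have hmapN : N.map (Int.castRingHom ℚ) = C ((b : ℤ) : ℚ) * minpoly ℚ x := by
    have h2 : N.map (algebraMap ℤ ℚ) = ((b : ℤ) : ℚ) • minpoly ℚ x := by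
      rw [hb, ← Int.cast_smul_eq_zsmul ℚ]
    rw [Polynomial.smul_eq_C_mul] at h2
    exact h2
  have h3 : N.map (Int.castRingHom ℚ) = C (N.content : ℚ) * (intMin x).map (Int.castRingHom ℚ) := by
    conv_lhs => rw [hcont]
    simp [Polynomial.map_mul]
  apply mul_left_cancel₀ (a := C (N.content : ℚ)) (by simpa using hcQ)
  rw [← h3, hmapN, ← mul_assoc, ← C_mul]
  congr 2
  field_simp

lemma intMin_natDegree (hx : IsAlgebraic ℚ x) : (intMin x).natDegree = adeg x := by
  obtain ⟨c, hc, h⟩ := intMin_map_eq hx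
  have h1 : ((intMin x).map (Int.castRingHom ℚ)).natDegree = (intMin x).natDegree :=
    (intMin x).natDegree_map_eq_of_injective (fun a b h => by simpa using h)
  rw [h, Polynomial.natDegree_C_mul hc] at h1
  exact h1.symm

end IntMin

section PolyHeight

lemma coeff_natAbs_le_polyHeight (P : Polynomial ℤ) (i : ℕ) :
    (P.coeff i).natAbs ≤ polyHeight P := by
  by_cases h : i ≤ P.natDegree
  · exact Finset.le_sup (f := fun i => (P.coeff i).natAbs)
      (Finset.mem_range.mpr (Nat.lt_succ_of_le h))
  · rw [P.coeff_eq_zero_of_natDegree_lt (lt_of_not_ge h)]; simp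

lemma polyHeight_le_iff {P : Polynomial ℤ} {H : ℕ} :
    polyHeight P ≤ H ↔ ∀ i, (P.coeff i).natAbs ≤ H := by
  constructor
  · exact fun h i => le_trans (coeff_natAbs_le_polyHeight P i) h
  · intro h
    exact Finset.sup_le fun i _ => h i

lemma polyHeight_pos {P : Polynomial ℤ} (hP : P ≠ 0) : 1 ≤ polyHeight P := by
  have h1 := coeff_natAbs_le_polyHeight P P.natDegree
  have h2 : P.coeff P.natDegree ≠ 0 := by
    rw [← Polynomial.leadingCoeff]
    exact Polynomial.leadingCoeff_ne_zero.mpr hP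
  have := Int.natAbs_pos.mpr h2
  omega

end PolyHeight

section HeightAnn

lemma mapQ_injective : Function.Injective (Polynomial.map (Int.castRingHom ℚ)) :=
  Polynomial.map_injective _ (fun a b h => by simpa using h)

lemma aheight_le_of_ann {γ : ℝ} (hγ : IsAlgebraic ℚ γ) {B : Polynomial ℤ} (hB0 : B ≠ 0)
    (hBdeg : B.natDegree = adeg γ) (hBev : Polynomial.aeval γ B = 0) :
    aheight γ ≤ polyHeight B := by
  obtain ⟨c, hc, hA⟩ := intMin_map_eq hγ
  have hBev' : Polynomial.aeval γ (B.map (Int.castRingHom ℚ)) = 0 := by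
    rw [← algebraMap_int_eq, Polynomial.aeval_map_algebraMap, hBev]
  have hdvd : minpoly ℚ γ ∣ B.map (Int.castRingHom ℚ) := minpoly.dvd ℚ γ hBev'
  obtain ⟨k, hk⟩ := hdvd
  have hBmap0 : B.map (Int.castRingHom ℚ) ≠ 0 := fun h => hB0 (mapQ_injective (by simpa using h))
  have hk0 : k ≠ 0 := by rintro rfl; simp [hk] at hBmap0
  have hmp0 : minpoly ℚ γ ≠ 0 := minpoly.ne_zero hγ.isIntegral
  have hdegmap : (B.map (Int.castRingHom ℚ)).natDegree = B.natDegree :=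
    B.natDegree_map_eq_of_injective (fun a b h => by simpa using h)
  have hkdeg : k.natDegree = 0 := by
    have := Polynomial.natDegree_mul hmp0 hk0
    rw [← hk, hdegmap, hBdeg] at this
    unfold adeg at this
    omega
  set r := k.coeff 0 with hrdef
  have hkC : k = C r := Polynomial.eq_C_of_natDegree_eq_zero hkdeg
  have hr0 : r ≠ 0 := by rintro h; rw [hkC, h, map_zero] at hk0; exact hk0 rfl
  rw [hkC] at hk
  have hcont0 : B.content ≠ 0 := by simpa [Ne, Polynomial.content_eq_zero_iff] using hB0
  have hcontQ : (B.content : ℚ) ≠ 0 := Int.cast_ne_zero.mpr hcont0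
  have hBsplit : B = C B.content * B.primPart := B.eq_C_content_mul_primPart
  have hPPmap : B.primPart.map (Int.castRingHom ℚ) = C (r / (B.content : ℚ)) * minpoly ℚ γ := by
    apply mul_left_cancel₀ (a := C (B.content : ℚ)) (by simpa using hcontQ)
    have : B.map (Int.castRingHom ℚ)
        = C (B.content : ℚ) * B.primPart.map (Int.castRingHom ℚ) := by
      conv_lhs => rw [hBsplit]
      rw [Polynomial.map_mul, Polynomial.map_C]
      norm_num
    rw [← this, hk, ← mul_assoc, ← C_mul, mul_comm (minpoly ℚ γ)]
    congr 2
    field_simp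
  have hd1 : (intMin γ).map (Int.castRingHom ℚ) ∣ B.primPart.map (Int.castRingHom ℚ) := by
    rw [hA, hPPmap]
    exact ⟨C (r / (B.content : ℚ) / c), by
      rw [mul_right_comm, ← C_mul]
      congr 1
      field_simp⟩
  have hd2 : B.primPart.map (Int.castRingHom ℚ) ∣ (intMin γ).map (Int.castRingHom ℚ) := by
    rw [hA, hPPmap]
    refine ⟨C (c * (B.content : ℚ) / r), ?_⟩
    rw [mul_right_comm, ← C_mul]
    congr 1
    field_simp
  have hassoc : Associated (intMin γ) B.primPart := by
    apply associated_of_dvd_dvd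
    · exact (Polynomial.IsPrimitive.Int.dvd_iff_map_cast_dvd_map_cast _ _ intMin_isPrimitive).mpr hd1
    · exact (Polynomial.IsPrimitive.Int.dvd_iff_map_cast_dvd_map_cast _ _
        (B.isPrimitive_primPart)).mpr hd2
  obtain ⟨u, hu⟩ := hassoc
  obtain ⟨s, hs, hsC⟩ := Polynomial.isUnit_iff.mp u.isUnit
  have hs1 : s.natAbs = 1 :=
    Int.isUnit_iff.mp hs |>.elim (fun h => by simp [h]) (fun h => by simp [h])
  show polyHeight (intMin γ) ≤ polyHeight B
  rw [polyHeight_le_iff]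
  intro i
  have hcoef : B.primPart.coeff i = (intMin γ).coeff i * s := by
    rw [← hu, ← hsC, Polynomial.coeff_mul_C]
  have hnat : (B.primPart.coeff i).natAbs = ((intMin γ).coeff i).natAbs := by
    rw [hcoef, Int.natAbs_mul, hs1, mul_one]
  have hBcoef : B.coeff i = B.content * B.primPart.coeff i := by
    conv_lhs => rw [hBsplit]
    rw [Polynomial.coeff_C_mul]
  calc ((intMin γ).coeff i).natAbs = (B.primPart.coeff i).natAbs := hnat.symm
    _ ≤ B.content.natAbs * (B.primPart.coeff i).natAbs :=
        Nat.le_mul_of_pos_left _ (Int.natAbs_pos.mpr hcont0)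
    _ = (B.coeff i).natAbs := by rw [hBcoef, Int.natAbs_mul]
    _ ≤ polyHeight B := coeff_natAbs_le_polyHeight B i

end HeightAnn

section DegMul

lemma coeff_sum_monomial {R : Type*} [Semiring R] (n : ℕ) (f : ℕ → R) (j : ℕ) :
    (∑ i ∈ Finset.range (n+1), monomial i (f i)).coeff j
      = if j < n+1 then f j else 0 := by
  rw [Polynomial.finset_sum_coeff]
  simp only [Polynomial.coeff_monomial]
  rw [Finset.sum_ite_eq' (Finset.range (n+1)) j f]
  simp

lemma natDegree_tsum_le {R : Type*} [Semiring R] (n : ℕ) (f : ℕ → R) :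
    (∑ i ∈ Finset.range (n+1), monomial i (f i)).natDegree ≤ n := by
  rw [Polynomial.natDegree_le_iff_coeff_eq_zero]
  intro m hm
  rw [coeff_sum_monomial, if_neg (by omega)]

lemma adeg_rat_mul_le (x : ℝ) (hx : IsAlgebraic ℚ x) (c : ℚ) (hc : c ≠ 0) :
    adeg ((c : ℝ) * x) ≤ adeg x := by
  set P := minpoly ℚ x with hP
  set n := P.natDegree with hn
  set R : Polynomial ℚ := ∑ i ∈ Finset.range (n+1), monomial i (P.coeff i * (c⁻¹)^i) with hR
  have hcoeff : ∀ j, R.coeff j = if j < n+1 then P.coeff j * (c⁻¹)^j else 0 :=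
    coeff_sum_monomial n _
  have hPn : P.coeff n = 1 := (minpoly.monic hx.isIntegral).coeff_natDegree
  have hR0 : R ≠ 0 := by
    intro h
    have := hcoeff n
    rw [h, Polynomial.coeff_zero, if_pos (Nat.lt_succ_self n), hPn, one_mul] at this
    exact (pow_ne_zero n (inv_ne_zero hc)) this.symm
  have hRdeg : R.natDegree ≤ n := natDegree_tsum_le n _
  have hRev : Polynomial.aeval ((c : ℝ) * x) R = 0 := by
    rw [Polynomial.aeval_eq_sum_range' (Nat.lt_succ_of_le hRdeg)]
    have : ∀ i ∈ Finset.range (n+1), R.coeff i • ((c : ℝ) * x) ^ i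
        = P.coeff i • x ^ i := by
      intro i hi
      rw [hcoeff i, if_pos (Finset.mem_range.mp hi)]
      rw [mul_pow]
      rw [Rat.smul_def, Rat.smul_def]
      push_cast
      field_simp
      rw [mul_assoc ((P.coeff i : ℚ) : ℝ), ← mul_pow, one_div, inv_mul_cancel₀ (by exact_mod_cast hc : (c:ℝ) ≠ 0), one_pow, mul_one]
    rw [Finset.sum_congr rfl this, ← Polynomial.aeval_eq_sum_range' (Nat.lt_succ_self n)]
    exact minpoly.aeval ℚ x
  have := minpoly.degree_le_of_ne_zero ℚ ((c : ℝ) * x) hR0 hRev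
  calc adeg ((c:ℝ)*x) ≤ R.natDegree := Polynomial.natDegree_le_natDegree this
    _ ≤ n := hRdeg

lemma adeg_rat_mul (x : ℝ) (hx : IsAlgebraic ℚ x) (c : ℚ) (hc : c ≠ 0) :
    adeg ((c : ℝ) * x) = adeg x := by
  refine le_antisymm (adeg_rat_mul_le x hx c hc) ?_
  have halg : IsAlgebraic ℚ ((c : ℝ) * x) :=
    ((isIntegral_algebraMap (x := c)).mul hx.isIntegral).isAlgebraic
  have := adeg_rat_mul_le ((c : ℝ) * x) halg c⁻¹ (inv_ne_zero hc)
  have hxx : ((c⁻¹ : ℚ) : ℝ) * ((c : ℝ) * x) = x := by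
    push_cast
    field_simp
  rwa [hxx] at this

end DegMul

section HeightMul

lemma height_rat_mul (α : ℝ) (hα : IsAlgebraic ℚ α) (p q : ℤ)
    (hp : 0 < p) (hpq : p ≤ q) :
    aheight ((p : ℝ) / (q : ℝ) * α) ≤ aheight α * q.natAbs ^ (adeg α) := by
  have hq : 0 < q := lt_of_lt_of_le hp hpq
  have hqR : (0:ℝ) < (q:ℝ) := by exact_mod_cast hq
  have hpR : (0:ℝ) < (p:ℝ) := by exact_mod_cast hp
  set m := adeg α with hm
  set A := intMin α with hA
  have hAdeg : A.natDegree = m := intMin_natDegree hα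
  have hAm : A.coeff m ≠ 0 := by
    rw [← hAdeg, ← Polynomial.leadingCoeff]
    exact Polynomial.leadingCoeff_ne_zero.mpr intMin_ne_zero
  set γ := (p : ℝ) / (q : ℝ) * α with hγdef
  set c : ℚ := (p : ℚ) / (q : ℚ) with hc
  have hc0 : c ≠ 0 := by
    rw [hc, div_ne_zero_iff]
    constructor <;> [exact_mod_cast hp.ne' ; exact_mod_cast hq.ne']
  have hγc : γ = (c : ℝ) * α := by rw [hγdef, hc]; push_cast; ring
  have hγalg : IsAlgebraic ℚ γ := by
    rw [hγc]
    exact ((isIntegral_algebraMap (x := c)).mul hα.isIntegral).isAlgebraic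
  have hγdeg : adeg γ = m := by rw [hγc, adeg_rat_mul α hα c hc0]
  set B : Polynomial ℤ := ∑ i ∈ Finset.range (m+1),
    monomial i (A.coeff i * p ^ (m - i) * q ^ i) with hB
  have hBcoeff : ∀ j, B.coeff j
      = if j < m+1 then A.coeff j * p ^ (m - j) * q ^ j else 0 :=
    coeff_sum_monomial m _
  have hBm : B.coeff m = A.coeff m * q ^ m := by
    rw [hBcoeff, if_pos (Nat.lt_succ_self m), Nat.sub_self, pow_zero, mul_one]
  have hB0 : B ≠ 0 := by
    intro h
    rw [h, Polynomial.coeff_zero] at hBm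
    exact (mul_ne_zero hAm (pow_ne_zero m hq.ne')) hBm.symm
  have hBdegle : B.natDegree ≤ m := natDegree_tsum_le m _
  have hBdeg : B.natDegree = m := le_antisymm hBdegle
    (Polynomial.le_natDegree_of_ne_zero (by rw [hBm]; exact mul_ne_zero hAm (pow_ne_zero m hq.ne')))
  have hBev : Polynomial.aeval γ B = 0 := by
    rw [Polynomial.aeval_eq_sum_range' (n := m + 1) (by rw [hBdeg]; omega) γ]
    have key : ∀ i ∈ Finset.range (m+1), B.coeff i • γ ^ i
        = (p:ℝ) ^ m * ((A.coeff i : ℝ) * α ^ i) := by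
      intro i hi
      have him : i ≤ m := Nat.lt_succ_iff.mp (Finset.mem_range.mp hi)
      rw [hBcoeff, if_pos (Finset.mem_range.mp hi), zsmul_eq_mul]
      push_cast
      have hγi : γ ^ i = (p:ℝ) ^ i * α ^ i / (q:ℝ) ^ i := by
        rw [hγdef, mul_pow, div_pow]; ring
      rw [hγi]
      field_simp
      have hpm : (p:ℝ)^(m-i) * (p:ℝ)^i = (p:ℝ)^m := by
        rw [← pow_add, Nat.sub_add_cancel him]
      linear_combination ((A.coeff i : ℝ) * α^i) * hpm
    rw [Finset.sum_congr rfl key, ← Finset.mul_sum]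
    have : ∑ i ∈ Finset.range (m+1), (A.coeff i : ℝ) * α ^ i = 0 := by
      have h2 := aeval_intMin hα
      rw [Polynomial.aeval_eq_sum_range' (n := m + 1) (by rw [← hA, hAdeg]; omega) α] at h2
      rw [← h2]
      apply Finset.sum_congr rfl
      intro i _
      rw [zsmul_eq_mul]
    rw [this, mul_zero]
  have h1 : aheight γ ≤ polyHeight B :=
    aheight_le_of_ann hγalg hB0 (by rw [hBdeg, hγdeg]) hBev
  refine le_trans h1 ?_
  rw [polyHeight_le_iff]
  intro j
  by_cases hj : j < m + 1
  · rw [hBcoeff, if_pos hj]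
    have hple : p.natAbs ≤ q.natAbs := by
      rw [Int.natAbs_le_iff_sq_le]; nlinarith [hp, hq, hpq]
    calc (A.coeff j * p ^ (m - j) * q ^ j).natAbs
        = (A.coeff j).natAbs * p.natAbs ^ (m - j) * q.natAbs ^ j := by
          rw [Int.natAbs_mul, Int.natAbs_mul, Int.natAbs_pow, Int.natAbs_pow]
      _ ≤ aheight α * (q.natAbs ^ (m - j) * q.natAbs ^ j) := by
          rw [← mul_assoc]
          apply Nat.mul_le_mul
          apply Nat.mul_le_mul
          · exact coeff_natAbs_le_polyHeight A j
          · exact Nat.pow_le_pow_left hple _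
          · exact le_refl _
      _ = aheight α * q.natAbs ^ m := by
          rw [← pow_add, Nat.sub_add_cancel (Nat.lt_succ_iff.mp hj)]
  · rw [hBcoeff, if_neg hj]
    simp

end HeightMul

section LconstFacts

lemma summable_liouville_terms :
    Summable (fun j : ℕ => 1 / (10 : ℝ) ^ (Nat.factorial (j + 1))) :=
  summable_one_div_pow_of_le (by norm_num)
    (fun j => le_trans (Nat.le_succ j) (Nat.self_le_factorial _))

lemma pk_div_qk (k : ℕ) : (pk k : ℝ) / (qk k : ℝ)
    = ∑ j ∈ Finset.range k, 1 / (10 : ℝ) ^ (Nat.factorial (j + 1)) := by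
  have hq : (qk k : ℝ) = 10 ^ (Nat.factorial k) := by
    simp [qk]
  have hp : (pk k : ℝ) = ∑ j ∈ Finset.range k,
      (10 : ℝ) ^ ((Nat.factorial k) - (Nat.factorial (j + 1))) := by
    simp [pk]
  rw [hp, hq, Finset.sum_div]
  apply Finset.sum_congr rfl
  intro j hj
  have hle : Nat.factorial (j + 1) ≤ Nat.factorial k :=
    Nat.factorial_le (Nat.succ_le_of_lt (Finset.mem_range.mp hj))
  rw [div_eq_div_iff (by positivity) (by positivity), one_mul, ← pow_add,
    Nat.sub_add_cancel hle]

lemma Lconst_eq (k : ℕ) :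
    Lconst = (pk k : ℝ) / (qk k : ℝ) + LiouvilleNumber.remainder 10 k := by
  rw [pk_div_qk]
  have h := Summable.sum_add_tsum_nat_add (f := fun j : ℕ => 1 / (10 : ℝ) ^ (Nat.factorial (j + 1)))
    k summable_liouville_terms
  beta_reduce at h
  rw [Lconst, ← h]
  have : LiouvilleNumber.remainder 10 k = ∑' (i : ℕ), 1 / (10:ℝ) ^ (i + k + 1).factorial := by
    unfold LiouvilleNumber.remainder
    apply tsum_congr fun i => ?_
    rw [show i + (k + 1) = i + k + 1 from by omega]
  rw [this]

lemma remainder_succ_lt (k : ℕ) :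
    LiouvilleNumber.remainder 10 (k + 1) < LiouvilleNumber.remainder 10 k := by
  have h1 := LiouvilleNumber.remainder_summable (m := (10:ℝ)) (by norm_num) k
  have h0 := Summable.tsum_eq_zero_add (f := fun i : ℕ => 1 / (10:ℝ) ^ (Nat.factorial (i + (k + 1)))) h1
  unfold LiouvilleNumber.remainder
  rw [h0]
  beta_reduce
  calc (∑' i : ℕ, 1 / (10:ℝ) ^ (Nat.factorial (i + (k + 1 + 1))))
      = ∑' i : ℕ, 1 / (10:ℝ) ^ (Nat.factorial (i + 1 + (k + 1))) := by
        apply tsum_congr; intro i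
        rw [show i + 1 + (k + 1) = i + (k + 1 + 1) from by omega]
    _ < 1 / (10:ℝ) ^ (Nat.factorial (0 + (k+1)))
        + ∑' i : ℕ, 1 / (10:ℝ) ^ (Nat.factorial (i + 1 + (k + 1))) := by
        apply lt_add_of_pos_left
        positivity

end LconstFacts

section MainEst

open Real

lemma main_est (α : ℝ) (hα0 : α ≠ 0) (Hα : ℕ) (hHα : 1 ≤ Hα) (m : ℕ) (w : ℝ) :
    ∃ N : ℕ, ∀ k, N ≤ k → ∀ H : ℕ, 1 ≤ H →
      (H : ℝ) ≤ (Hα : ℝ) * ((10:ℝ) ^ (Nat.factorial k)) ^ m →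
      |α| * LiouvilleNumber.remainder 10 k < (H : ℝ) ^ (-w - 1) := by
  set s := max (w + 1) 0 with hs
  have hs0 : 0 ≤ s := le_max_right _ _
  have hws : w + 1 ≤ s := le_max_left _ _
  have hHαR : (1:ℝ) ≤ (Hα : ℝ) := by exact_mod_cast hHα
  set T := |α| * (Hα : ℝ) ^ s with hT
  have hT0 : 0 < T := by
    apply mul_pos (abs_pos.mpr hα0)
    exact rpow_pos_of_pos (by linarith) s
  obtain ⟨N₀, hN₀⟩ := pow_unbounded_of_one_lt T (by norm_num : (1:ℝ) < 10)
  set Ns := Nat.ceil ((m : ℝ) * s) with hNs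
  refine ⟨N₀ + Ns + 1, fun k hk H hH1 hHle => ?_⟩
  set q := (10:ℝ) ^ (Nat.factorial k) with hq
  have hq1 : (1:ℝ) < q := one_lt_pow₀ (by norm_num) (Nat.factorial_ne_zero k)
  have hq0 : (0:ℝ) < q := lt_trans one_pos hq1
  have h10q : (10:ℝ) ≤ q := by
    calc (10:ℝ) = 10 ^ 1 := (pow_one _).symm
    _ ≤ q := pow_le_pow_right₀ (by norm_num) (Nat.one_le_iff_ne_zero.mpr (Nat.factorial_ne_zero k))
  have hH0 : (0:ℝ) < (H:ℝ) := by exact_mod_cast hH1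
  have hH1R : (1:ℝ) ≤ (H:ℝ) := by exact_mod_cast hH1
  have hA : |α| * LiouvilleNumber.remainder 10 k < |α| * (1 / q ^ k) := by
    apply mul_lt_mul_of_pos_left _ (abs_pos.mpr hα0)
    exact LiouvilleNumber.remainder_lt k (by norm_num)
  have hqm0 : (0:ℝ) < (Hα : ℝ) * q ^ m := by positivity
  have hD : |α| * (1 / q ^ k) ≤ ((Hα : ℝ) * q ^ m) ^ (-s) := by
    rw [rpow_neg hqm0.le]
    rw [mul_one_div, div_le_iff₀ (by positivity), inv_mul_eq_div, le_div_iff₀ (by positivity)]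
    have hsplit : ((Hα : ℝ) * q ^ m) ^ s = (Hα : ℝ) ^ s * q ^ ((m : ℝ) * s) := by
      rw [mul_rpow (by positivity) (by positivity)]
      congr 1
      rw [← rpow_natCast q m, ← rpow_mul hq0.le]
    rw [hsplit, ← mul_assoc]
    have hTq : T * q ^ ((m:ℝ) * s) ≤ q ^ (k : ℝ) := by
      have hexp : (N₀ : ℝ) + (m:ℝ) * s ≤ (k : ℝ) := by
        have h1 : ((m:ℝ) * s) ≤ Ns := Nat.le_ceil _
        have h2 : (N₀ + Ns + 1 : ℝ) ≤ (k:ℝ) := by exact_mod_cast hk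
        linarith
      have hTle : T ≤ q ^ ((k:ℝ) - (m:ℝ) * s) := by
        calc T ≤ 10 ^ N₀ := hN₀.le
        _ ≤ q ^ N₀ := pow_le_pow_left₀ (by norm_num) h10q N₀
        _ = q ^ (N₀ : ℝ) := (rpow_natCast q N₀).symm
        _ ≤ q ^ ((k:ℝ) - (m:ℝ) * s) := by
            apply rpow_le_rpow_of_exponent_le hq1.le
            linarith
      calc T * q ^ ((m:ℝ) * s) ≤ q ^ ((k:ℝ) - (m:ℝ) * s) * q ^ ((m:ℝ) * s) := by
            apply mul_le_mul_of_nonneg_right hTle (by positivity)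
      _ = q ^ (k:ℝ) := by rw [← rpow_add hq0]; ring_nf
    calc |α| * (Hα:ℝ) ^ s * q ^ ((m:ℝ)*s) = T * q ^ ((m:ℝ)*s) := by rw [hT]
    _ ≤ q ^ (k:ℝ) := hTq
    _ = q ^ k := rpow_natCast q k
  have hC : ((Hα : ℝ) * q ^ m) ^ (-s) ≤ (H : ℝ) ^ (-s) :=
    rpow_le_rpow_of_nonpos hH0 hHle (by linarith)
  have hB : (H : ℝ) ^ (-s) ≤ (H : ℝ) ^ (-w - 1) := by
    apply rpow_le_rpow_of_exponent_le hH1R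
    linarith
  linarith

end MainEst

theorem stmt11 (α : ℝ) (hα0 : α ≠ 0) (hα : IsAlgebraic ℚ α) (m : ℕ)
    (hm : adeg α = m) :
    ∀ w : ℝ, (wSet (α * Lconst) m w).Infinite := by
  intro w
  have hHα : 1 ≤ aheight α := polyHeight_pos intMin_ne_zero
  obtain ⟨N, hN⟩ := main_est α hα0 (aheight α) hHα m w
  set g : ℕ → ℝ := fun k => (pk k : ℝ) / (qk k : ℝ) * α with hg
  -- remainder facts
  have hrem_anti : StrictAnti (fun k => LiouvilleNumber.remainder 10 k) :=
    strictAnti_nat_of_succ_lt remainder_succ_lt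
  have hrem_pos : ∀ k : ℕ, 0 < LiouvilleNumber.remainder 10 k :=
    fun k => LiouvilleNumber.remainder_pos (by norm_num) k
  -- pk, qk facts for k ≥ 1
  have hqkpos : ∀ k : ℕ, (0:ℤ) < qk k := fun k => pow_pos (by norm_num) _
  have hpkpos : ∀ k : ℕ, 1 ≤ k → (0:ℤ) < pk k := by
    intro k hk
    apply Finset.sum_pos (fun j _ => pow_pos (by norm_num) _)
    exact ⟨0, Finset.mem_range.mpr (by omega)⟩
  have hLlt1 : Lconst < 1 := by
    have h0 : Lconst = (pk 0 : ℝ) / (qk 0 : ℝ) + LiouvilleNumber.remainder 10 0 := Lconst_eq 0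
    have hp0 : pk 0 = 0 := by simp [pk]
    have hrem0 : LiouvilleNumber.remainder 10 0 < (1 - 1/10)⁻¹ * (1 / (10:ℝ) ^ (0+1).factorial) :=
      LiouvilleNumber.remainder_lt' 0 (by norm_num)
    rw [h0, hp0]
    norm_num at hrem0 ⊢
    linarith
  have hpklt : ∀ k : ℕ, pk k ≤ qk k := by
    intro k
    have h1 : (pk k : ℝ) / (qk k : ℝ) < 1 := by
      have := Lconst_eq k
      have := hrem_pos k
      nlinarith [hLlt1]
    have hq : (0:ℝ) < (qk k : ℝ) := by exact_mod_cast hqkpos k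
    have : (pk k : ℝ) < (qk k : ℝ) := by
      rw [div_lt_one hq] at h1
      exact h1
    exact_mod_cast this.le
  -- difference identity
  have hdiff : ∀ k : ℕ, α * Lconst - g k = α * LiouvilleNumber.remainder 10 k := by
    intro k
    have h := Lconst_eq k
    rw [hg, h]
    ring
  -- membership
  have hmem : ∀ k : ℕ, max N 1 ≤ k → g k ∈ wSet (α * Lconst) m w := by
    intro k hk
    have hk1 : 1 ≤ k := le_trans (le_max_right N 1) hk
    have hkN : N ≤ k := le_trans (le_max_left N 1) hk
    have hppos := hpkpos k hk1
    have hqpos := hqkpos k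
    set c : ℚ := (pk k : ℚ) / (qk k : ℚ) with hc
    have hc0 : c ≠ 0 := by
      rw [hc, div_ne_zero_iff]
      constructor
      · exact_mod_cast hppos.ne'
      · exact_mod_cast hqpos.ne'
    have hgc : g k = (c : ℝ) * α := by rw [hg, hc]; push_cast; ring
    have halg : IsAlgebraic ℚ (g k) := by
      rw [hgc]
      exact ((isIntegral_algebraMap (x := c)).mul hα.isIntegral).isAlgebraic
    have hdeg : adeg (g k) = m := by rw [hgc, adeg_rat_mul α hα c hc0, hm]
    have habs : |α * Lconst - g k| = |α| * LiouvilleNumber.remainder 10 k := by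
      rw [hdiff k, abs_mul, abs_of_pos (hrem_pos k)]
    have hpos : 0 < |α * Lconst - g k| := by
      rw [habs]
      exact mul_pos (abs_pos.mpr hα0) (hrem_pos k)
    -- height bound
    have hheight : (aheight (g k) : ℝ) ≤ (aheight α : ℝ) * ((10:ℝ) ^ (Nat.factorial k)) ^ m := by
      have hb := height_rat_mul α hα (pk k) (qk k) hppos (hpklt k)
      rw [hm] at hb
      have hqnat : ((qk k).natAbs : ℝ) = (10:ℝ) ^ (Nat.factorial k) := by
        rw [qk, Int.natAbs_pow]
        push_cast
        norm_num
      have : ((aheight ((pk k : ℝ) / (qk k : ℝ) * α)) : ℝ)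
          ≤ (aheight α : ℝ) * ((qk k).natAbs : ℝ) ^ m := by
        exact_mod_cast hb
      rw [hqnat] at this
      exact this
    have hH1 : 1 ≤ aheight (g k) := polyHeight_pos intMin_ne_zero
    have hlt := hN k hkN (aheight (g k)) hH1 hheight
    rw [← habs] at hlt
    exact ⟨halg, hdeg, hpos, hlt⟩
  -- injectivity
  have hginj : Function.Injective (fun j : ℕ => g (max N 1 + j)) := by
    intro a b hab
    simp only [hg] at hab
    have h1 : (pk (max N 1 + a) : ℝ) / (qk (max N 1 + a) : ℝ)
        = (pk (max N 1 + b) : ℝ) / (qk (max N 1 + b) : ℝ) :=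
      mul_right_cancel₀ hα0 hab
    have h2 : LiouvilleNumber.remainder 10 (max N 1 + a)
        = LiouvilleNumber.remainder 10 (max N 1 + b) := by
      have ha := Lconst_eq (max N 1 + a)
      have hb := Lconst_eq (max N 1 + b)
      rw [ha] at hb
      rw [h1] at hb
      linarith
    have := hrem_anti.injective h2
    omega
  apply Set.infinite_of_injective_forall_mem hginj
  intro j
  exact hmem (max N 1 + j) (Nat.le_add_right _ _)
end
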